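/- For every integer n ≥ 0: ∑_{r=-∞}^{∞} (-1)^r q^{r^2} [2n choose n - r]_q = (q; q^2)_n, where (q;q^2)_n = ∏_{j=0}^{n-1}(1 - q^{2j+1}). -/

import Mathlib

open Finset

noncomputable section

abbrev F := RatFunc ℚ

/-- The variable `q`, a transcendental element. -/
def q : F := RatFunc.X

/-- `(b;b)_n = ∏_{i=1}^n (1 - b^i)` -/
def pq (b : F) (n : ℕ) : F := ∏ i ∈ Finset.range n, (1 - b ^ (i + 1))

/-- Gaussian binomial coefficient in base `b`, zero when `k < 0` or `k > a`. -/
def qbin (b : F) (a k : ℤ) : F :=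
  if 0 ≤ k ∧ k ≤ a then pq b a.toNat / (pq b k.toNat * pq b (a - k).toNat) else 0

/-- Primed Gaussian binomial: equals 1 when `a < 0` and `k = 0`. -/
def qbin' (b : F) (a k : ℤ) : F :=
  if a < 0 ∧ k = 0 then 1 else qbin b a k

lemma q_ne_zero : q ≠ 0 := RatFunc.X_ne_zero

lemma qpow_ne_one (k : ℕ) (hk : 1 ≤ k) : (q : F) ^ k ≠ 1 := by
  intro h
  have h2 : (algebraMap (Polynomial ℚ) F) (Polynomial.X ^ k) = algebraMap (Polynomial ℚ) F 1 := by
    simpa [q, RatFunc.algebraMap_X] using h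
  have h3 := RatFunc.algebraMap_injective ℚ h2
  have := congrArg Polynomial.natDegree h3
  simp [Polynomial.natDegree_X_pow] at this
  omega

lemma one_sub_qpow_ne_zero (k : ℕ) : (1 : F) - q ^ (k + 1) ≠ 0 := by
  intro h
  exact qpow_ne_one (k + 1) (by omega) (by linear_combination -h)

lemma pq_ne_zero (m : ℕ) : pq q m ≠ 0 := by
  unfold pq
  rw [Finset.prod_ne_zero_iff]
  exact fun i _ => one_sub_qpow_ne_zero i

lemma pq_succ (b : F) (m : ℕ) : pq b (m + 1) = pq b m * (1 - b ^ (m + 1)) :=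
  Finset.prod_range_succ _ _

lemma pq_zero (b : F) : pq b 0 = 1 := Finset.prod_range_zero _

lemma qbin_of_neg {b : F} {a k : ℤ} (h : k < 0) : qbin b a k = 0 := by
  unfold qbin; rw [if_neg]; omega

lemma qbin_of_gt {b : F} {a k : ℤ} (h : a < k) : qbin b a k = 0 := by
  unfold qbin; rw [if_neg]; omega

lemma qbin_zero {a : ℤ} (h : 0 ≤ a) : qbin q a 0 = 1 := by
  unfold qbin
  rw [if_pos ⟨le_refl 0, h⟩]
  simp [pq_zero, div_self (pq_ne_zero a.toNat)]

lemma qbin_self {a : ℤ} (h : 0 ≤ a) : qbin q a a = 1 := by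
  unfold qbin
  rw [if_pos ⟨h, le_refl a⟩, sub_self]
  simp [pq_zero, div_self (pq_ne_zero a.toNat)]

lemma qbin_symm {a k : ℤ} (h : 0 ≤ a) : qbin q a (a - k) = qbin q a k := by
  unfold qbin
  by_cases hc : 0 ≤ k ∧ k ≤ a
  · rw [if_pos (by omega), if_pos hc, show a - (a - k) = k by ring, mul_comm]
  · rw [if_neg (by omega), if_neg hc]


lemma pascal1 (a k : ℤ) (ha : 0 ≤ a) :
    qbin q (a + 1) k = qbin q a (k - 1) + q ^ k * qbin q a k := by
  rcases lt_or_ge k 0 with hk | hk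
  · rw [qbin_of_neg hk, qbin_of_neg (by omega : k - 1 < 0), qbin_of_neg hk]; ring
  rcases eq_or_lt_of_le hk with hk0 | hkpos
  · subst hk0
    rw [qbin_zero (by omega), qbin_of_neg (by omega : (0:ℤ) - 1 < 0), qbin_zero ha, zpow_zero]
    ring
  rcases lt_or_ge a k with hka | hka
  · rcases eq_or_lt_of_le (by omega : a + 1 ≤ k) with hk1 | hk1
    · rw [← hk1, qbin_self (by omega), show a + 1 - 1 = a by ring, qbin_self ha,
        qbin_of_gt (by omega : a < a + 1)]
      ring
    · rw [qbin_of_gt hk1, qbin_of_gt (by omega : a < k - 1), qbin_of_gt hka]; ring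
  -- main case : 1 ≤ k, k - 1 ≤ a
  set J : ℕ := (k - 1).toNat with hJ
  set M : ℕ := (a - k).toNat with hM
  have hkJ : k = (J : ℤ) + 1 := by omega
  have haM : a = (J : ℤ) + (M : ℤ) + 1 := by omega
  unfold qbin
  rw [if_pos (by omega), if_pos (by omega), if_pos (by omega)]
  rw [show (a + 1).toNat = J + M + 2 by omega, show k.toNat = J + 1 by omega,
    show (a + 1 - k).toNat = M + 1 by omega, show (k - 1).toNat = J by omega,
    show (a - (k - 1)).toNat = M + 1 by omega, show (a - k).toNat = M by omega,
    show a.toNat = J + M + 1 by omega]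
  have hq : (q : F) ^ k = q ^ (J + 1 : ℕ) := by
    rw [show k = ((J + 1 : ℕ) : ℤ) by omega, zpow_natCast]
  rw [hq]
  rw [show J + M + 2 = (J + M + 1) + 1 from rfl, pq_succ q (J + M + 1),
    show J + 1 = J + 1 from rfl, pq_succ q J, pq_succ q M]
  have n1 := pq_ne_zero (J + M + 1)
  have n2 := pq_ne_zero J
  have n3 := pq_ne_zero M
  have n4 := one_sub_qpow_ne_zero J
  have n5 := one_sub_qpow_ne_zero M
  have n6 := one_sub_qpow_ne_zero (J + M + 1)
  field_simp
  ring

lemma pascal2 (a k : ℤ) (ha : 0 ≤ a) :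
    qbin q (a + 1) k = q ^ (a + 1 - k) * qbin q a (k - 1) + qbin q a k := by
  rcases lt_or_ge k 0 with hk | hk
  · rw [qbin_of_neg hk, qbin_of_neg (by omega : k - 1 < 0), qbin_of_neg hk]; ring
  rcases eq_or_lt_of_le hk with hk0 | hkpos
  · subst hk0
    rw [qbin_zero (by omega), qbin_of_neg (by omega : (0:ℤ) - 1 < 0), qbin_zero ha]
    ring
  rcases lt_or_ge a k with hka | hka
  · rcases eq_or_lt_of_le (by omega : a + 1 ≤ k) with hk1 | hk1
    · rw [← hk1, qbin_self (by omega), show a + 1 - 1 = a by ring, qbin_self ha,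
        qbin_of_gt (by omega : a < a + 1), sub_self, zpow_zero]
      ring
    · rw [qbin_of_gt hk1, qbin_of_gt (by omega : a < k - 1), qbin_of_gt hka]; ring
  set J : ℕ := (k - 1).toNat with hJ
  set M : ℕ := (a - k).toNat with hM
  have hkJ : k = (J : ℤ) + 1 := by omega
  have haM : a = (J : ℤ) + (M : ℤ) + 1 := by omega
  unfold qbin
  rw [if_pos (by omega), if_pos (by omega), if_pos (by omega)]
  rw [show (a + 1).toNat = J + M + 2 by omega, show k.toNat = J + 1 by omega,
    show (a + 1 - k).toNat = M + 1 by omega, show (k - 1).toNat = J by omega,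
    show (a - (k - 1)).toNat = M + 1 by omega, show (a - k).toNat = M by omega,
    show a.toNat = J + M + 1 by omega]
  have hq : (q : F) ^ (a + 1 - k) = q ^ (M + 1 : ℕ) := by
    rw [show a + 1 - k = ((M + 1 : ℕ) : ℤ) by omega, zpow_natCast]
  rw [hq]
  rw [show J + M + 2 = (J + M + 1) + 1 from rfl, pq_succ q (J + M + 1),
    pq_succ q J, pq_succ q M]
  have n1 := pq_ne_zero (J + M + 1)
  have n2 := pq_ne_zero J
  have n3 := pq_ne_zero M
  have n4 := one_sub_qpow_ne_zero J
  have n5 := one_sub_qpow_ne_zero M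
  have n6 := one_sub_qpow_ne_zero (J + M + 1)
  field_simp
  ring

/-- coefficient `(-1)^r q^(r² + t r)` -/
def Wc (t r : ℤ) : F := (-1 : F) ^ r * q ^ (r ^ 2 + t * r)

/-- the bilateral sum -/
def W (t m s : ℤ) : F := ∑ᶠ r : ℤ, Wc t r * qbin q m (s - r)

lemma qq (a b : ℤ) : (q : F) ^ a * q ^ b = q ^ (a + b) := (zpow_add₀ q_ne_zero a b).symm

lemma n1_sq (r : ℤ) : (-1 : F) ^ r * (-1 : F) ^ r = 1 := by
  rw [← zpow_add₀ (by norm_num : (-1 : F) ≠ 0), show r + r = 2 * r by ring, zpow_mul]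
  norm_num

lemma n1_neg (r : ℤ) : (-1 : F) ^ (-r) = (-1 : F) ^ r := by
  rw [zpow_neg]
  exact inv_eq_of_mul_eq_one_left (n1_sq r)

lemma n1_sub_one (r : ℤ) : (-1 : F) ^ (r - 1) = -(-1 : F) ^ r := by
  rw [zpow_sub₀ (by norm_num : (-1 : F) ≠ 0), zpow_one, div_neg, div_one]

lemma n1_add_one (r : ℤ) : (-1 : F) ^ (r + 1) = -(-1 : F) ^ r := by
  rw [zpow_add₀ (by norm_num : (-1 : F) ≠ 0), zpow_one]; ring

lemma Wc_sub_one (t r : ℤ) : Wc t (r - 1) = -(q ^ (1 - 2 * r - t)) * Wc t r := by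
  unfold Wc
  rw [n1_sub_one]
  have h2 : (q : F) ^ ((r - 1) ^ 2 + t * (r - 1)) = q ^ (1 - 2 * r - t) * q ^ (r ^ 2 + t * r) := by
    rw [qq]; congr 1; ring
  rw [h2]; ring

lemma Wc_add_one (t r : ℤ) : Wc t (r + 1) = -(q ^ (2 * r + 1 + t)) * Wc t r := by
  unfold Wc
  rw [n1_add_one]
  have h2 : (q : F) ^ ((r + 1) ^ 2 + t * (r + 1)) = q ^ (2 * r + 1 + t) * q ^ (r ^ 2 + t * r) := by
    rw [qq]; congr 1; ring
  rw [h2]; ring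

lemma Wc_neg (t r : ℤ) : Wc t (-r) = Wc (-t) r := by
  unfold Wc
  rw [n1_neg, show (-r) ^ 2 + t * (-r) = r ^ 2 + (-t) * r by ring]

lemma Wc_qpow (t u r : ℤ) : Wc t r * q ^ (u * r) = Wc (t + u) r := by
  unfold Wc
  rw [mul_assoc, qq, show r ^ 2 + t * r + u * r = r ^ 2 + (t + u) * r by ring]

lemma qbin_ne_zero_bounds {b : F} {a k : ℤ} (h : qbin b a k ≠ 0) : 0 ≤ k ∧ k ≤ a := by
  by_contra hc
  exact h (by unfold qbin; rw [if_neg hc])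

lemma supp_fin (g : ℤ → F) (m s : ℤ) :
    (Function.support fun r => g r * qbin q m (s - r)).Finite := by
  apply Set.Finite.subset (Set.finite_Icc (s - m) s)
  intro r hr
  simp only [Function.mem_support] at hr
  have h : qbin q m (s - r) ≠ 0 := fun h0 => hr (by rw [h0, mul_zero])
  have h2 := qbin_ne_zero_bounds h
  simp only [Set.mem_Icc]
  omega

lemma finsum_shift (f : ℤ → F) (d : ℤ) : (∑ᶠ r : ℤ, f (r + d)) = ∑ᶠ r : ℤ, f r :=
  finsum_comp_equiv (Equiv.addRight d)

lemma L2 (t n : ℤ) (hn : 0 ≤ n) :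
    W t (2 * n + 1) n = W t (2 * n) n - q ^ (n + 1 - t) * W (t - 1) (2 * n) n := by
  have h2n : (0 : ℤ) ≤ 2 * n := by omega
  have step1 : ∀ r : ℤ, Wc t r * qbin q (2 * n + 1) (n - r)
      = (Wc t r * q ^ (n + 1 + r)) * qbin q (2 * n) ((n - 1) - r)
        + Wc t r * qbin q (2 * n) (n - r) := by
    intro r
    have hp := pascal2 (2 * n) (n - r) h2n
    rw [hp, show 2 * n + 1 - (n - r) = n + 1 + r by ring,
      show n - r - 1 = (n - 1) - r by ring]
    ring
  have hsplit : W t (2 * n + 1) n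
      = (∑ᶠ r : ℤ, (Wc t r * q ^ (n + 1 + r)) * qbin q (2 * n) ((n - 1) - r))
        + W t (2 * n) n := by
    unfold W
    rw [finsum_congr step1]
    exact finsum_add_distrib (supp_fin (fun r => Wc t r * q ^ (n + 1 + r)) _ _)
      (supp_fin (Wc t) _ _)
  have hshift : (∑ᶠ r : ℤ, (Wc t r * q ^ (n + 1 + r)) * qbin q (2 * n) ((n - 1) - r))
      = -(q ^ (n + 1 - t)) * W (t - 1) (2 * n) n := by
    calc (∑ᶠ r : ℤ, (Wc t r * q ^ (n + 1 + r)) * qbin q (2 * n) ((n - 1) - r))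
        = ∑ᶠ r : ℤ, (Wc t (r + -1) * q ^ (n + 1 + (r + -1)))
            * qbin q (2 * n) ((n - 1) - (r + -1)) :=
          (finsum_shift (fun r => (Wc t r * q ^ (n + 1 + r)) * qbin q (2 * n) ((n - 1) - r))
            (-1)).symm
      _ = ∑ᶠ r : ℤ, -(q ^ (n + 1 - t)) * (Wc (t - 1) r * qbin q (2 * n) (n - r)) := by
          refine finsum_congr fun s => ?_
          rw [show s + -1 = s - 1 by ring, Wc_sub_one, show n + 1 + (s - 1) = n + s by ring,
            show (n - 1) - (s - 1) = n - s by ring]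
          simp only [Wc]
          have e1 : (q : F) ^ (1 - 2 * s - t) * q ^ (s ^ 2 + t * s) * q ^ (n + s)
              = q ^ (n + 1 - t) * q ^ (s ^ 2 + (t - 1) * s) := by
            rw [qq, qq, qq]; congr 1; ring
          linear_combination (-((-1 : F) ^ s * qbin q (2 * n) (n - s))) * e1
      _ = -(q ^ (n + 1 - t)) * W (t - 1) (2 * n) n :=
          (mul_finsum _ _).symm
  rw [hsplit, hshift]; ring

lemma L3 (t n : ℤ) (hn : 0 ≤ n) :
    W t (2 * n + 2) (n + 1) = W t (2 * n + 1) n - q ^ (n + 1 + t) * W (t + 1) (2 * n + 1) n := by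
  have h2n : (0 : ℤ) ≤ 2 * n + 1 := by omega
  have step1 : ∀ r : ℤ, Wc t r * qbin q (2 * n + 2) ((n + 1) - r)
      = Wc t r * qbin q (2 * n + 1) (n - r)
        + (Wc t r * q ^ (n + 1 - r)) * qbin q (2 * n + 1) ((n + 1) - r) := by
    intro r
    have hp := pascal1 (2 * n + 1) ((n + 1) - r) h2n
    rw [show (2 * n + 2 : ℤ) = (2 * n + 1) + 1 by ring, hp,
      show n + 1 - r - 1 = n - r by ring]
    ring
  have hsplit : W t (2 * n + 2) (n + 1)
      = W t (2 * n + 1) n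
        + ∑ᶠ r : ℤ, (Wc t r * q ^ (n + 1 - r)) * qbin q (2 * n + 1) ((n + 1) - r) := by
    unfold W
    rw [finsum_congr step1]
    exact finsum_add_distrib (supp_fin (Wc t) _ _)
      (supp_fin (fun r => Wc t r * q ^ (n + 1 - r)) _ _)
  have hshift : (∑ᶠ r : ℤ, (Wc t r * q ^ (n + 1 - r)) * qbin q (2 * n + 1) ((n + 1) - r))
      = -(q ^ (n + 1 + t)) * W (t + 1) (2 * n + 1) n := by
    calc (∑ᶠ r : ℤ, (Wc t r * q ^ (n + 1 - r)) * qbin q (2 * n + 1) ((n + 1) - r))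
        = ∑ᶠ r : ℤ, (Wc t (r + 1) * q ^ (n + 1 - (r + 1)))
            * qbin q (2 * n + 1) ((n + 1) - (r + 1)) :=
          (finsum_shift
            (fun r => (Wc t r * q ^ (n + 1 - r)) * qbin q (2 * n + 1) ((n + 1) - r)) 1).symm
      _ = ∑ᶠ r : ℤ, -(q ^ (n + 1 + t)) * (Wc (t + 1) r * qbin q (2 * n + 1) (n - r)) := by
          refine finsum_congr fun s => ?_
          rw [Wc_add_one, show n + 1 - (s + 1) = n - s by ring]
          simp only [Wc]
          have e1 : (q : F) ^ (2 * s + 1 + t) * q ^ (s ^ 2 + t * s) * q ^ (n - s)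
              = q ^ (n + 1 + t) * q ^ (s ^ 2 + (t + 1) * s) := by
            rw [qq, qq, qq]; congr 1; ring
          linear_combination (-((-1 : F) ^ s * qbin q (2 * n + 1) (n - s))) * e1
      _ = -(q ^ (n + 1 + t)) * W (t + 1) (2 * n + 1) n :=
          (mul_finsum _ _).symm
  rw [hsplit, hshift]; ring

lemma L4 (t n : ℤ) (hn : 0 ≤ n) :
    W t (2 * n + 1) n = q ^ n * W (t - 1) (2 * n) n - q ^ (1 - t) * W (t - 2) (2 * n) n := by
  have h2n : (0 : ℤ) ≤ 2 * n := by omega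
  have step1 : ∀ r : ℤ, Wc t r * qbin q (2 * n + 1) (n - r)
      = Wc t r * qbin q (2 * n) ((n - 1) - r)
        + (Wc t r * q ^ (n - r)) * qbin q (2 * n) (n - r) := by
    intro r
    have hp := pascal1 (2 * n) (n - r) h2n
    rw [show (2 * n + 1 : ℤ) = (2 * n) + 1 by ring, hp,
      show n - r - 1 = (n - 1) - r by ring]
    ring
  have hsplit : W t (2 * n + 1) n
      = (∑ᶠ r : ℤ, Wc t r * qbin q (2 * n) ((n - 1) - r))
        + ∑ᶠ r : ℤ, (Wc t r * q ^ (n - r)) * qbin q (2 * n) (n - r) := by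
    unfold W
    rw [finsum_congr step1]
    exact finsum_add_distrib (supp_fin (Wc t) _ _)
      (supp_fin (fun r => Wc t r * q ^ (n - r)) _ _)
  have hsecond : (∑ᶠ r : ℤ, (Wc t r * q ^ (n - r)) * qbin q (2 * n) (n - r))
      = q ^ n * W (t - 1) (2 * n) n := by
    calc (∑ᶠ r : ℤ, (Wc t r * q ^ (n - r)) * qbin q (2 * n) (n - r))
        = ∑ᶠ r : ℤ, q ^ n * (Wc (t - 1) r * qbin q (2 * n) (n - r)) := by
          refine finsum_congr fun s => ?_
          simp only [Wc]
          have e1 : (q : F) ^ (s ^ 2 + t * s) * q ^ (n - s)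
              = q ^ n * q ^ (s ^ 2 + (t - 1) * s) := by
            rw [qq, qq]; congr 1; ring
          linear_combination ((-1 : F) ^ s * qbin q (2 * n) (n - s)) * e1
      _ = q ^ n * W (t - 1) (2 * n) n :=
          (mul_finsum _ _).symm
  have hfirst : (∑ᶠ r : ℤ, Wc t r * qbin q (2 * n) ((n - 1) - r))
      = -(q ^ (1 - t)) * W (t - 2) (2 * n) n := by
    calc (∑ᶠ r : ℤ, Wc t r * qbin q (2 * n) ((n - 1) - r))
        = ∑ᶠ r : ℤ, Wc t (r + -1) * qbin q (2 * n) ((n - 1) - (r + -1)) :=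
          (finsum_shift (fun r => Wc t r * qbin q (2 * n) ((n - 1) - r)) (-1)).symm
      _ = ∑ᶠ r : ℤ, -(q ^ (1 - t)) * (Wc (t - 2) r * qbin q (2 * n) (n - r)) := by
          refine finsum_congr fun s => ?_
          rw [show s + -1 = s - 1 by ring, Wc_sub_one,
            show (n - 1) - (s - 1) = n - s by ring]
          simp only [Wc]
          have e1 : (q : F) ^ (1 - 2 * s - t) * q ^ (s ^ 2 + t * s)
              = q ^ (1 - t) * q ^ (s ^ 2 + (t - 2) * s) := by
            rw [qq, qq]; congr 1; ring
          linear_combination (-((-1 : F) ^ s * qbin q (2 * n) (n - s))) * e1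
      _ = -(q ^ (1 - t)) * W (t - 2) (2 * n) n :=
          (mul_finsum _ _).symm
  rw [hsplit, hsecond, hfirst]; ring

lemma Wsymm (n : ℤ) (hn : 0 ≤ n) : W (-1) (2 * n) n = W 1 (2 * n) n := by
  have h2n : (0 : ℤ) ≤ 2 * n := by omega
  calc W (-1) (2 * n) n
      = ∑ᶠ r : ℤ, Wc (-1) (-r) * qbin q (2 * n) (n - -r) :=
        (finsum_comp_equiv (Equiv.neg ℤ)).symm
    _ = ∑ᶠ r : ℤ, Wc 1 r * qbin q (2 * n) (n - r) := by
        refine finsum_congr fun s => ?_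
        rw [Wc_neg, show -(-1 : ℤ) = 1 by ring, show n - -s = 2 * n - (n - s) by ring,
          qbin_symm h2n]
    _ = W 1 (2 * n) n := rfl

lemma Wbase : W 0 0 0 = 1 := by
  unfold W
  rw [finsum_eq_single _ 0 ?h]
  · norm_num [Wc, qbin_zero]
  · intro r hr
    rcases lt_or_gt_of_ne hr with h | h
    · rw [qbin_of_gt (by omega : (0 : ℤ) < 0 - r), mul_zero]
    · rw [qbin_of_neg (by omega : (0 : ℤ) - r < 0), mul_zero]

lemma W1_eq (n : ℤ) (hn : 0 ≤ n) : W 1 (2 * n) n = q ^ n * W 0 (2 * n) n := by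
  have h2 := L2 1 n hn
  have h4 := L4 1 n hn
  rw [show (1 : ℤ) - 1 = 0 by ring, show n + 1 - 1 = n by ring] at h2
  rw [show (1 : ℤ) - 1 = 0 by ring, show (1 : ℤ) - 2 = -1 by ring, zpow_zero,
    Wsymm n hn] at h4
  have h5 : (2 : F) * W 1 (2 * n) n = (2 : F) * (q ^ n * W 0 (2 * n) n) := by
    linear_combination h4 - h2
  have h6 : (2 : F) ≠ 0 := by
    have h7 : (algebraMap (Polynomial ℚ) F) 2 ≠ 0 := RatFunc.algebraMap_ne_zero (by norm_num)
    rwa [map_ofNat] at h7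
  exact mul_left_cancel₀ h6 h5

lemma Srec (n : ℤ) (hn : 0 ≤ n) :
    W 0 (2 * n + 2) (n + 1) = (1 - q ^ (2 * n + 1)) * W 0 (2 * n) n := by
  have hw1 := W1_eq n hn
  have h3 := L3 0 n hn
  have h20 := L2 0 n hn
  have h21 := L2 1 n hn
  have hq : (q : F) ^ (n + 1) * q ^ n = q ^ (2 * n + 1) := by rw [qq]; congr 1; ring
  rw [show (0 : ℤ) + 1 = 1 by ring, show n + 1 + 0 = n + 1 by ring] at h3
  rw [show n + 1 - 0 = n + 1 by ring, show (0 : ℤ) - 1 = -1 by ring, Wsymm n hn, hw1] at h20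
  rw [show n + 1 - 1 = n by ring, show (1 : ℤ) - 1 = 0 by ring, hw1] at h21
  rw [h3, h20, h21]
  linear_combination (-(W 0 (2 * n) n)) * hq

lemma main_eq (n : ℕ) :
    W 0 (2 * (n : ℤ)) (n : ℤ) = ∏ j ∈ Finset.range n, (1 - q ^ (2 * j + 1)) := by
  induction n with
  | zero => simpa using Wbase
  | succ m ih =>
      rw [show ((m + 1 : ℕ) : ℤ) = (m : ℤ) + 1 by push_cast; ring,
        show 2 * ((m : ℤ) + 1) = 2 * (m : ℤ) + 2 by ring,
        Srec (m : ℤ) (by positivity), ih, Finset.prod_range_succ]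
      rw [show (2 * (m : ℤ) + 1) = ((2 * m + 1 : ℕ) : ℤ) by push_cast; ring, zpow_natCast]
      ring

theorem stmt15 (n : ℕ) :
    (∑ᶠ r : ℤ, (-1 : F) ^ r * q ^ (r ^ 2) * qbin q (2 * (n : ℤ)) ((n : ℤ) - r)) =
      ∏ j ∈ Finset.range n, (1 - q ^ (2 * j + 1)) := by
  rw [← main_eq n]
  unfold W
  refine finsum_congr fun r => ?_
  simp only [Wc]
  rw [show r ^ 2 + 0 * r = r ^ 2 by ring]
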